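/- Chiral symmetry of the Hamiltonian implies the stated transformation of the evolution operator: let d, n ≥ 1, let H : (Fin d → ℝ) → ℝ → Matrix n n ℂ be continuous with each H(k,t) Hermitian, and let C be an n×n unitary matrix such that C·H(k,t)·C⁻¹ = -H(k,1-t) for all k and t. Suppose U : (Fin d → ℝ) → ℝ → Matrix n n ℂ satisfies U(k,0) = 1 and, for every k and t, the derivative in t of U(k,·) at t equals -i·H(k,t)·U(k,t). Then every U(k,t) is unitary and C·U(k,t)·C⁻¹ = U(k,1-t) · (U(k,1))ᴴ for all k and t, where Mᴴ denotes the conjugate transpose. -/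

import Mathlib

open Matrix

attribute [local instance] Matrix.normedAddCommGroup Matrix.normedSpace

section helpers
variable {n : ℕ}
local notation "M" => Matrix (Fin n) (Fin n) ℂ

noncomputable def mulCLM (n : ℕ) :
    Matrix (Fin n) (Fin n) ℂ →L[ℝ] Matrix (Fin n) (Fin n) ℂ →L[ℝ] Matrix (Fin n) (Fin n) ℂ :=
  LinearMap.toContinuousLinearMap
    ((LinearMap.toContinuousLinearMap :
        (Matrix (Fin n) (Fin n) ℂ →ₗ[ℝ] Matrix (Fin n) (Fin n) ℂ) ≃ₗ[ℝ] _).toLinearMap ∘ₗ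
      (LinearMap.mul ℝ (Matrix (Fin n) (Fin n) ℂ)))

@[simp] lemma mulCLM_apply (A B : M) : mulCLM n A B = A * B := rfl

lemma HasDerivAt.matMul {f g : ℝ → M} {f' g' : M} {t : ℝ}
    (hf : HasDerivAt f f' t) (hg : HasDerivAt g g' t) :
    HasDerivAt (fun t => f t * g t) (f' * g t + f t * g') t := by
  have h1 := (mulCLM n).hasDerivAt_of_bilinear (fun _ => hf) (fun _ => hg)
  rw [add_comm]
  exact h1

noncomputable def ctCLM (n : ℕ) :
    Matrix (Fin n) (Fin n) ℂ →L[ℝ] Matrix (Fin n) (Fin n) ℂ :=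
  LinearMap.toContinuousLinearMap
    { toFun := fun A => Aᴴ
      map_add' := by intro A B; simp
      map_smul' := by intro r A; simp }

lemma HasDerivAt.ct {f : ℝ → M} {f' : M} {t : ℝ} (hf : HasDerivAt f f' t) :
    HasDerivAt (fun t => (f t)ᴴ) f'ᴴ t := by
  have h1 := (ctCLM n).hasFDerivAt.comp_hasDerivAt t hf
  exact h1

lemma const_of_hasDerivAt_zero {f : ℝ → M} (hf : ∀ t, HasDerivAt f 0 t) (t : ℝ) :
    f t = f 0 := by
  have hd : Differentiable ℝ f := fun t => (hf t).differentiableAt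
  have h0 : ∀ t, deriv f t = 0 := fun t => (hf t).deriv
  exact is_const_of_deriv_eq_zero hd h0 t 0
end helpers

/-- chiral symmetry of the Hamiltonian implies that the time-evolution
operator is unitary and satisfies `C U(k,t) C⁻¹ = U(k,1-t) (U(k,1))ᴴ`. -/
theorem evolution_chiral_symmetry {d n : ℕ} (hd : 1 ≤ d) (hn : 1 ≤ n)
    (H : (Fin d → ℝ) → ℝ → Matrix (Fin n) (Fin n) ℂ)
    (hHcont : Continuous fun p : (Fin d → ℝ) × ℝ => H p.1 p.2)
    (hHherm : ∀ k t, (H k t).IsHermitian)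
    (C : Matrix (Fin n) (Fin n) ℂ) (hC : C ∈ Matrix.unitaryGroup (Fin n) ℂ)
    (hCH : ∀ k t, C * H k t * C⁻¹ = -(H k (1 - t)))
    (U : (Fin d → ℝ) → ℝ → Matrix (Fin n) (Fin n) ℂ)
    (hU0 : ∀ k, U k 0 = 1)
    (hUde : ∀ k t, HasDerivAt (U k) ((-Complex.I) • (H k t * U k t)) t) :
    (∀ k t, U k t ∈ Matrix.unitaryGroup (Fin n) ℂ) ∧
    ∀ k t, C * U k t * C⁻¹ = U k (1 - t) * (U k 1)ᴴ := by
  -- unitarity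
  have hGconst : ∀ k t, (U k t)ᴴ * U k t = 1 := by
    intro k t
    have hder : ∀ s, HasDerivAt (fun s => (U k s)ᴴ * U k s) 0 s := by
      intro s
      have h := ((hUde k s).ct).matMul (hUde k s)
      have hH : (H k s)ᴴ = H k s := (hHherm k s).eq
      have : ((-Complex.I) • (H k s * U k s))ᴴ * U k s +
          (U k s)ᴴ * ((-Complex.I) • (H k s * U k s)) = 0 := by
        rw [conjTranspose_smul]
        simp [Matrix.conjTranspose_mul, hH, Matrix.mul_smul, Matrix.smul_mul,
          Matrix.mul_assoc, smul_smul]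
      rwa [this] at h
    have := const_of_hasDerivAt_zero hder t
    simpa [hU0 k] using this
  have hUunit : ∀ k t, U k t ∈ Matrix.unitaryGroup (Fin n) ℂ := by
    intro k t
    rw [Matrix.mem_unitaryGroup_iff']
    exact hGconst k t
  refine ⟨hUunit, ?_⟩
  intro k t
  -- chiral part
  have hCinv : C⁻¹ = Cᴴ := by
    rw [Matrix.inv_eq_left_inv]
    exact (Matrix.mem_unitaryGroup_iff'.mp hC)
  have hCC : Cᴴ * C = 1 := Matrix.mem_unitaryGroup_iff'.mp hC
  have hCC' : C * Cᴴ = 1 := Matrix.mem_unitaryGroup_iff.mp hC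
  set W : ℝ → Matrix (Fin n) (Fin n) ℂ := fun t => C * U k t * Cᴴ with hWdef
  set Z : ℝ → Matrix (Fin n) (Fin n) ℂ := fun t => U k (1 - t) * (U k 1)ᴴ with hZdef
  have hUU' : ∀ s, U k s * (U k s)ᴴ = 1 := by
    intro s
    exact Matrix.mem_unitaryGroup_iff.mp (hUunit k s)
  -- derivative of W
  have hWder : ∀ s, HasDerivAt W (Complex.I • (H k (1 - s) * W s)) s := by
    intro s
    have h1 := ((hasDerivAt_const s C).matMul (hUde k s)).matMul (hasDerivAt_const s Cᴴ)
    have heq : (0 * U k s + C * ((-Complex.I) • (H k s * U k s))) * Cᴴ +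
        C * U k s * 0 = Complex.I • (H k (1 - s) * W s) := by
      have hCHC : C * H k s * Cᴴ = -(H k (1 - s)) := by rw [← hCinv]; exact hCH k s
      have hmid : C * ((-Complex.I) • (H k s * U k s)) * Cᴴ
          = (-Complex.I) • ((C * H k s * Cᴴ) * (C * U k s * Cᴴ)) := by
        rw [Matrix.mul_smul, Matrix.smul_mul]
        congr 1
        calc C * (H k s * U k s) * Cᴴ
            = C * (H k s * ((Cᴴ * C) * (U k s * Cᴴ))) := by
              rw [hCC]; simp only [Matrix.one_mul, Matrix.mul_assoc]
          _ = C * H k s * Cᴴ * (C * U k s * Cᴴ) := by simp only [Matrix.mul_assoc]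
      rw [Matrix.zero_mul, Matrix.mul_zero, zero_add, add_zero, hmid, hCHC]
      show (-Complex.I) • (-(H k (1 - s)) * (C * U k s * Cᴴ))
          = Complex.I • (H k (1 - s) * (C * U k s * Cᴴ))
      rw [Matrix.neg_mul, smul_neg, neg_smul, neg_neg]
    rw [heq] at h1
    exact h1
  -- derivative of Z
  have hZder : ∀ s, HasDerivAt Z (Complex.I • (H k (1 - s) * Z s)) s := by
    intro s
    have hg : HasDerivAt (fun x : ℝ => 1 - x) (-1) s := by
      simpa using (hasDerivAt_id s).const_sub 1
    have h1 : HasDerivAt (fun x => U k (1 - x))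
        ((-1 : ℝ) • ((-Complex.I) • (H k (1 - s) * U k (1 - s)))) s :=
      (hUde k (1 - s)).scomp s hg
    have h2 := h1.matMul (hasDerivAt_const s (U k 1)ᴴ)
    have heq : ((-1 : ℝ) • ((-Complex.I) • (H k (1 - s) * U k (1 - s)))) * (U k 1)ᴴ +
        U k (1 - s) * 0 = Complex.I • (H k (1 - s) * Z s) := by
      simp [hZdef, Matrix.smul_mul, Matrix.mul_assoc]
    rw [heq] at h2
    exact h2
  -- F = Wᴴ Z is constant
  have hFder : ∀ s, HasDerivAt (fun s => (W s)ᴴ * Z s) 0 s := by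
    intro s
    have h := ((hWder s).ct).matMul (hZder s)
    have hH : (H k (1 - s))ᴴ = H k (1 - s) := (hHherm k (1 - s)).eq
    have heq : (Complex.I • (H k (1 - s) * W s))ᴴ * Z s +
        (W s)ᴴ * (Complex.I • (H k (1 - s) * Z s)) = 0 := by
      rw [conjTranspose_smul]
      simp [Matrix.conjTranspose_mul, hH, Matrix.mul_smul, Matrix.smul_mul,
        Matrix.mul_assoc, Complex.star_def, Complex.conj_I]
    rwa [heq] at h
  have hF : (W t)ᴴ * Z t = 1 := by
    have := const_of_hasDerivAt_zero hFder t
    rw [this]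
    have hW0 : W 0 = C * Cᴴ := by simp [hWdef, hU0 k]
    have hZ0 : Z 0 = U k 1 * (U k 1)ᴴ := by simp [hZdef]
    rw [hW0, hZ0, hCC', hUU']
    simp
  -- conclude
  have hWWH : W t * (W t)ᴴ = 1 := by
    show C * U k t * Cᴴ * (C * U k t * Cᴴ)ᴴ = 1
    simp only [Matrix.conjTranspose_mul, conjTranspose_conjTranspose]
    calc C * U k t * Cᴴ * (C * ((U k t)ᴴ * Cᴴ))
        = C * (U k t * ((Cᴴ * C) * ((U k t)ᴴ * Cᴴ))) := by simp only [Matrix.mul_assoc]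
      _ = C * (U k t * (U k t)ᴴ * Cᴴ) := by
          rw [hCC]; simp only [Matrix.one_mul, Matrix.mul_assoc]
      _ = 1 := by rw [hUU', Matrix.one_mul, hCC']
  have : W t = Z t := by
    calc W t = W t * ((W t)ᴴ * Z t) := by rw [hF, Matrix.mul_one]
      _ = W t * (W t)ᴴ * Z t := (Matrix.mul_assoc _ _ _).symm
      _ = Z t := by rw [hWWH, Matrix.one_mul]
  rw [hCinv]
  exact this
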